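/- For any claw-free graph G, the chromatic number of the square of G satisfies χ(G²) ≤ 2ω(G)² − 2ω(G) + 1, where ω(G) is the clique number of G. -/

import Mathlib

open SimpleGraph Finset

variable {V : Type*}

/-- A graph is claw-free if it has no induced `K_{1,3}`. -/
def ClawFree (G : SimpleGraph V) : Prop :=
  ∀ v a b c : V, G.Adj v a → G.Adj v b → G.Adj v c →
    a ≠ b → a ≠ c → b ≠ c → G.Adj a b ∨ G.Adj a c ∨ G.Adj b c

/-- The square of a graph: join distinct vertices at distance at most 2. -/
def square (G : SimpleGraph V) : SimpleGraph V where
  Adj u w := u ≠ w ∧ (G.Adj u w ∨ ∃ x, G.Adj u x ∧ G.Adj x w)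
  symm := by
    refine ⟨?_⟩
    rintro u w ⟨h1, h2⟩
    refine ⟨h1.symm, ?_⟩
    rcases h2 with h | ⟨x, hx1, hx2⟩
    · exact Or.inl h.symm
    · exact Or.inr ⟨x, hx2.symm, hx1.symm⟩
  loopless := ⟨fun u h => h.1 rfl⟩

/-- The second neighbourhood of `v` : vertices at distance exactly two from `v`. -/
def secondNbhd (G : SimpleGraph V) (v : V) : Set V :=
  {w | w ≠ v ∧ ¬G.Adj v w ∧ ∃ x, G.Adj v x ∧ G.Adj x w}

/-- The square degree of a vertex. -/
noncomputable def sqDeg (G : SimpleGraph V) (v : V) : ℕ :=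
  ((square G).neighborSet v).ncard


/-- Greedy coloring along an ordering `e`. -/
noncomputable def gcol [Fintype V] (G : SimpleGraph V) (e : V → ℕ) (v : V) : ℕ :=
  sInf {m : ℕ | ∀ u, e u < e v → G.Adj u v → gcol G e u ≠ m}
termination_by e v

lemma gcol_set_nonempty [Fintype V] (G : SimpleGraph V) (e : V → ℕ) (v : V) :
    {m : ℕ | ∀ u, e u < e v → G.Adj u v → gcol G e u ≠ m}.Nonempty := by
  classical
  set F : Finset ℕ :=
    ((Finset.univ.filter fun u => e u < e v ∧ G.Adj u v)).image (gcol G e) with hF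
  refine ⟨F.sup id + 1, fun u h1 h2 => ?_⟩
  have : gcol G e u ∈ F := by
    simp [hF]
    exact ⟨u, ⟨h1, h2⟩, rfl⟩
  have := Finset.le_sup (f := id) this
  simp only [id_eq] at this
  omega

lemma gcol_mem [Fintype V] (G : SimpleGraph V) (e : V → ℕ) (v : V) :
    gcol G e v ∈ {m : ℕ | ∀ u, e u < e v → G.Adj u v → gcol G e u ≠ m} := by
  rw [gcol]
  exact Nat.sInf_mem (gcol_set_nonempty G e v)

lemma gcol_lt [Fintype V] (G : SimpleGraph V) [DecidableRel G.Adj] (e : V → ℕ) {n : ℕ}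
    (hdeg : ∀ v, G.degree v < n) (v : V) : gcol G e v < n := by
  classical
  set F : Finset ℕ :=
    (((G.neighborFinset v).filter fun u => e u < e v)).image (gcol G e) with hF
  have hcard : F.card < n := by
    calc F.card ≤ _ := Finset.card_image_le
    _ ≤ (G.neighborFinset v).card := Finset.card_filter_le _ _
    _ < n := hdeg v
  have : ∃ m, m < n ∧ m ∉ F := by
    by_contra h
    push_neg at h
    have hsub : Finset.range n ⊆ F := fun m hm => h m (Finset.mem_range.mp hm)
    have := Finset.card_le_card hsub
    simp [Finset.card_range] at this
    omega
  obtain ⟨m, hmn, hmF⟩ := this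
  have hmem : m ∈ {m : ℕ | ∀ u, e u < e v → G.Adj u v → gcol G e u ≠ m} := by
    intro u h1 h2 heq
    exact hmF (by
      simp [hF]
      exact ⟨u, ⟨h2.symm, h1⟩, heq⟩)
  have : gcol G e v ≤ m := by
    rw [gcol]
    exact Nat.sInf_le hmem
  omega

lemma colorable_of_degree_lt [Fintype V] (G : SimpleGraph V) [DecidableRel G.Adj] {n : ℕ}
    (hdeg : ∀ v, G.degree v < n) : G.Colorable n := by
  classical
  set e : V → ℕ := fun v => ((Fintype.equivFin V) v : ℕ) with he
  have hinj : Function.Injective e := fun a b h => by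
    apply (Fintype.equivFin V).injective
    exact Fin.val_injective h
  refine ⟨SimpleGraph.Coloring.mk (fun v => ⟨gcol G e v, gcol_lt G e hdeg v⟩) ?_⟩
  intro a b hab heq
  have hne : e a ≠ e b := fun h => (G.ne_of_adj hab) (hinj h)
  have heq' : gcol G e a = gcol G e b := by simpa using heq
  rcases lt_or_gt_of_ne hne with h | h
  · exact gcol_mem G e b a h hab heq'
  · exact gcol_mem G e a b h hab.symm heq'.symm

private lemma arith_aux (d s τ k : ℕ) (hdτ : d + 3 ≤ τ + 2*k) (hdbound : d + k ≤ k*k)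
    (hF3 : s * τ + d ≤ d * k) (hτ1 : 1 ≤ τ) (hk2 : 2 ≤ k) :
    d + s + 2*k ≤ 2*(k*k) := by
  have hgoal : (d : ℤ) + s + 2 * k ≤ 2 * (k * k) := by
    have F1 : (d : ℤ) + 3 ≤ τ + 2 * k := by exact_mod_cast hdτ
    have F2 : (d : ℤ) + k ≤ k * k := by exact_mod_cast hdbound
    have F3 : (s : ℤ) * τ + d ≤ d * k := by exact_mod_cast hF3
    have hτ1' : (1 : ℤ) ≤ τ := by exact_mod_cast hτ1
    have hk2' : (2 : ℤ) ≤ k := by exact_mod_cast hk2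
    rcases le_or_gt (k : ℤ) (τ + 1) with hA | hB
    · have h1 : (d : ℤ) * k ≤ d * (τ + 1) :=
        mul_le_mul_of_nonneg_left hA (by positivity)
      have h2 : (s : ℤ) * τ ≤ d * τ := by nlinarith
      have h3 : (s : ℤ) ≤ d := le_of_mul_le_mul_right h2 (by linarith)
      linarith
    · have hτk : (τ : ℤ) ≤ k - 2 := by linarith
      have h1 : (0 : ℤ) ≤ (τ - 1) * (2 * k * k - 5 * k + 3 - τ) := by
        apply mul_nonneg (by linarith)
        nlinarith [sq_nonneg ((k : ℤ) - 2)]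
      have h2 : (d : ℤ) * (τ + k - 1) ≤ (τ + 2 * k - 3) * (τ + k - 1) :=
        mul_le_mul_of_nonneg_right (by linarith) (by linarith)
      nlinarith
  exact_mod_cast hgoal

lemma sq_degree_bound [Fintype V] [DecidableEq V] (G : SimpleGraph V) [DecidableRel G.Adj]
    [DecidableRel (square G).Adj] (hG : ClawFree G) (v : V) :
    (square G).degree v + 2 * G.cliqueNum ≤ 2 * (G.cliqueNum * G.cliqueNum) := by
  classical
  set k := G.cliqueNum with hk
  set N := G.neighborFinset v with hN
  set S := Finset.univ.filter
      (fun w => ¬ G.Adj v w ∧ w ≠ v ∧ ∃ x, G.Adj v x ∧ G.Adj x w) with hSdef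
  have hmemN : ∀ z, z ∈ N ↔ G.Adj v z := fun z => G.mem_neighborFinset v z
  have hmemS : ∀ w, w ∈ S ↔ ¬ G.Adj v w ∧ w ≠ v ∧ ∃ x, G.Adj v x ∧ G.Adj x w := by
    intro w; simp [hSdef]
  have hclique : ∀ (s : Finset V), G.IsClique (s : Set V) → s.card ≤ k :=
    fun s hs => IsClique.card_le_cliqueNum (tc := hs)
  have hk1 : 1 ≤ k := by
    have h1 : G.IsClique ({v} : Finset V) := by simp
    have := hclique {v} h1
    simpa using this
  -- split the square degree
  have hsplit : (square G).degree v = N.card + S.card := by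
    have hunion : (square G).neighborFinset v = N ∪ S := by
      ext w
      simp only [SimpleGraph.mem_neighborFinset, Finset.mem_union, hmemN, hmemS]
      constructor
      · rintro ⟨hne, h | h⟩
        · exact Or.inl h
        · by_cases hadj : G.Adj v w
          · exact Or.inl hadj
          · exact Or.inr ⟨hadj, Ne.symm hne, h⟩
      · rintro (h | ⟨h1, h2, h3⟩)
        · exact ⟨h.ne, Or.inl h⟩
        · exact ⟨Ne.symm h2, Or.inr h3⟩
    have hdisj : Disjoint N S := by
      rw [Finset.disjoint_left]
      intro a haN haS
      exact ((hmemS a).mp haS).1 ((hmemN a).mp haN)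
    rw [SimpleGraph.degree, hunion, Finset.card_union_of_disjoint hdisj]
  -- E cliques : non-neighbours of x inside N
  have hE : ∀ x ∈ N, ((N.filter fun z => z ≠ x ∧ ¬ G.Adj x z).card) + 1 ≤ k := by
    intro x hx
    set E := N.filter fun z => z ≠ x ∧ ¬ G.Adj x z with hEdef
    have hEN : E ⊆ N := Finset.filter_subset _ _
    have hvE : v ∉ E := fun h => G.irrefl ((hmemN v).mp (hEN h))
    have hcl : G.IsClique ((insert v E : Finset V) : Set V) := by
      rw [Finset.coe_insert]
      intro a ha b hb hab
      rcases Set.mem_insert_iff.mp ha with rfl | haE <;>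
        rcases Set.mem_insert_iff.mp hb with rfl | hbE
      · exact absurd rfl hab
      · exact (hmemN b).mp (hEN hbE)
      · exact ((hmemN a).mp (hEN haE)).symm
      · obtain ⟨haN, hax, hnax⟩ := Finset.mem_filter.mp haE
        obtain ⟨hbN, hbx, hnbx⟩ := Finset.mem_filter.mp hbE
        have := hG v x a b ((hmemN x).mp hx) ((hmemN a).mp haN) ((hmemN b).mp hbN)
          (Ne.symm hax) (Ne.symm hbx) hab
        tauto
    have := hclique _ hcl
    rwa [Finset.card_insert_of_notMem hvE] at this
  -- C cliques : second neighbours adjacent to x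
  have hC : ∀ x ∈ N, ((S.filter fun w => G.Adj x w).card) + 1 ≤ k := by
    intro x hx
    set C := S.filter fun w => G.Adj x w with hCdef
    have hCS : C ⊆ S := Finset.filter_subset _ _
    have hxC : x ∉ C := fun h => ((hmemS x).mp (hCS h)).1 ((hmemN x).mp hx)
    have hcl : G.IsClique ((insert x C : Finset V) : Set V) := by
      rw [Finset.coe_insert]
      intro a ha b hb hab
      rcases Set.mem_insert_iff.mp ha with rfl | haC <;>
        rcases Set.mem_insert_iff.mp hb with rfl | hbC
      · exact absurd rfl hab
      · exact (Finset.mem_filter.mp hbC).2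
      · exact ((Finset.mem_filter.mp haC).2).symm
      · obtain ⟨haS, hxa⟩ := Finset.mem_filter.mp haC
        obtain ⟨hbS, hxb⟩ := Finset.mem_filter.mp hbC
        obtain ⟨hva, hav, -⟩ := (hmemS a).mp haS
        obtain ⟨hvb, hbv, -⟩ := (hmemS b).mp hbS
        have := hG x v a b ((hmemN x).mp hx).symm hxa hxb
          (Ne.symm hav) (Ne.symm hbv) hab
        -- first ne : v ≠ a
        tauto
    have := hclique _ hcl
    rwa [Finset.card_insert_of_notMem hxC] at this
  -- D cliques
  have hD : ∀ w, ¬ G.Adj v w → ∀ x ∈ N, G.Adj x w →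
      ((N.filter fun z => G.Adj x z ∧ ¬ G.Adj w z).card) + 2 ≤ k := by
    intro w hvw x hx hxw
    set D := N.filter fun z => G.Adj x z ∧ ¬ G.Adj w z with hDdef
    have hDN : D ⊆ N := Finset.filter_subset _ _
    have hxD : x ∉ D := fun h => G.irrefl (Finset.mem_filter.mp h).2.1
    have hvD : v ∉ D := fun h => G.irrefl ((hmemN v).mp (hDN h))
    have hvx : v ≠ x := fun h => G.irrefl (h ▸ (hmemN x).mp hx)
    have hvins : v ∉ insert x D := by
      simp only [Finset.mem_insert]
      rintro (h | h); exact hvx h; exact hvD h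
    have hcl : G.IsClique ((insert v (insert x D) : Finset V) : Set V) := by
      rw [Finset.coe_insert, Finset.coe_insert]
      intro a ha b hb hab
      rcases Set.mem_insert_iff.mp ha with rfl | ha' <;>
        rcases Set.mem_insert_iff.mp hb with rfl | hb'
      · exact absurd rfl hab
      · rcases Set.mem_insert_iff.mp hb' with rfl | hbD
        · exact (hmemN b).mp hx
        · exact (hmemN b).mp (hDN hbD)
      · rcases Set.mem_insert_iff.mp ha' with rfl | haD
        · exact ((hmemN a).mp hx).symm
        · exact ((hmemN a).mp (hDN haD)).symm
      · rcases Set.mem_insert_iff.mp ha' with rfl | haD <;>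
          rcases Set.mem_insert_iff.mp hb' with rfl | hbD
        · exact absurd rfl hab
        · exact (Finset.mem_filter.mp hbD).2.1
        · exact ((Finset.mem_filter.mp haD).2.1).symm
        · obtain ⟨haN, hxa, hwa⟩ := Finset.mem_filter.mp haD
          obtain ⟨hbN, hxb, hwb⟩ := Finset.mem_filter.mp hbD
          have hwa' : w ≠ a := fun h => hvw (h ▸ (hmemN a).mp haN)
          have hwb' : w ≠ b := fun h => hvw (h ▸ (hmemN b).mp hbN)
          have := hG x w a b hxw hxa hxb hwa' hwb' hab
          tauto
    have := hclique _ hcl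
    rw [Finset.card_insert_of_notMem hvins, Finset.card_insert_of_notMem hxD] at this
    omega
  -- decomposition of N given a second neighbour w
  have hdec : ∀ w ∈ S, N.card + 3 ≤ (N.filter fun x => G.Adj x w).card + 2 * k := by
    intro w hw
    obtain ⟨hnadj, hne, x, hvx, hxw⟩ := (hmemS w).mp hw
    have hxN : x ∈ N := (hmemN x).mpr hvx
    set T := N.filter fun y => G.Adj y w with hTdef
    have hxT : x ∈ T := Finset.mem_filter.mpr ⟨hxN, hxw⟩
    set D := N.filter fun z => G.Adj x z ∧ ¬ G.Adj w z with hDdef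
    set E := N.filter fun z => z ≠ x ∧ ¬ G.Adj x z with hEdef
    have hsub : N ⊆ insert x ((T.erase x) ∪ (D ∪ E)) := by
      intro z hz
      simp only [Finset.mem_insert, Finset.mem_union, Finset.mem_erase]
      by_cases h1 : z = x
      · exact Or.inl h1
      by_cases h2 : G.Adj x z
      · by_cases h3 : G.Adj w z
        · exact Or.inr (Or.inl ⟨h1, Finset.mem_filter.mpr ⟨hz, h3.symm⟩⟩)
        · exact Or.inr (Or.inr (Or.inl (Finset.mem_filter.mpr ⟨hz, h2, h3⟩)))
      · exact Or.inr (Or.inr (Or.inr (Finset.mem_filter.mpr ⟨hz, h1, h2⟩)))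
    have hc1 : N.card ≤ 1 + ((T.erase x).card + (D.card + E.card)) := by
      calc N.card ≤ (insert x ((T.erase x) ∪ (D ∪ E))).card := Finset.card_le_card hsub
        _ ≤ ((T.erase x) ∪ (D ∪ E)).card + 1 := Finset.card_insert_le _ _
        _ ≤ ((T.erase x).card + (D ∪ E).card) + 1 := by
            exact Nat.add_le_add_right (Finset.card_union_le _ _) 1
        _ ≤ ((T.erase x).card + (D.card + E.card)) + 1 := by
            exact Nat.add_le_add_right (Nat.add_le_add_left (Finset.card_union_le _ _) _) 1
        _ = 1 + ((T.erase x).card + (D.card + E.card)) := by omega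
    have hTpos : 1 ≤ T.card := Finset.card_pos.mpr ⟨x, hxT⟩
    have herase : (T.erase x).card = T.card - 1 := Finset.card_erase_of_mem hxT
    have hDcard := hD w hnadj x hxN hxw
    have hEcard := hE x hxN
    rw [← hDdef] at hDcard
    rw [← hEdef] at hEcard
    omega
  -- bound on the size of N
  have hdbound : N.card + k ≤ k * k := by
    set P := N.powerset.filter (fun (A : Finset V) => G.IsClique (A : Set V)) with hPdef
    have hPne : P.Nonempty := ⟨∅, by simp [hPdef]⟩
    obtain ⟨A, hAP, hAmax⟩ := Finset.exists_max_image P (fun A => A.card) hPne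
    obtain ⟨hAN', hAcl⟩ := Finset.mem_filter.mp hAP
    have hAN : A ⊆ N := Finset.mem_powerset.mp hAN'
    have hvA : v ∉ A := fun h => G.irrefl ((hmemN v).mp (hAN h))
    -- A ∪ {v} is a clique
    have hAk : A.card + 1 ≤ k := by
      have hcl : G.IsClique ((insert v A : Finset V) : Set V) := by
        rw [Finset.coe_insert]
        intro a ha b hb hab
        rcases Set.mem_insert_iff.mp ha with rfl | haA <;>
          rcases Set.mem_insert_iff.mp hb with rfl | hbA
        · exact absurd rfl hab
        · exact (hmemN b).mp (hAN hbA)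
        · exact ((hmemN a).mp (hAN haA)).symm
        · exact hAcl haA hbA hab
      have := hclique _ hcl
      rwa [Finset.card_insert_of_notMem hvA] at this
    -- every vertex of N is in A or a non-neighbour of some x ∈ A
    have hcover : ∀ u ∈ N, u ∈ A ∨ ∃ x ∈ A, u ≠ x ∧ ¬ G.Adj x u := by
      intro u hu
      by_cases huA : u ∈ A
      · exact Or.inl huA
      right
      by_contra hno
      push_neg at hno
      have hadj : ∀ x ∈ A, G.Adj x u := by
        intro x hxA
        rcases hno x hxA with h
        by_cases hux : u = x
        · exact absurd (hux ▸ hxA) huA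
        · exact h hux
      have hclA : G.IsClique ((insert u A : Finset V) : Set V) := by
        rw [Finset.coe_insert]
        intro a ha b hb hab
        rcases Set.mem_insert_iff.mp ha with rfl | haA <;>
          rcases Set.mem_insert_iff.mp hb with rfl | hbA
        · exact absurd rfl hab
        · exact (hadj b hbA).symm
        · exact hadj a haA
        · exact hAcl haA hbA hab
      have hmem : insert u A ∈ P := by
        refine Finset.mem_filter.mpr ⟨Finset.mem_powerset.mpr ?_, hclA⟩
        intro z hz
        rcases Finset.mem_insert.mp hz with rfl | hzA
        · exact hu
        · exact hAN hzA
      have := hAmax _ hmem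
      rw [Finset.card_insert_of_notMem huA] at this
      omega
    have hsub : N ⊆ A ∪ A.biUnion (fun x => N.filter fun z => z ≠ x ∧ ¬ G.Adj x z) := by
      intro u hu
      rcases hcover u hu with h | ⟨x, hxA, hux, hnadj⟩
      · exact Finset.mem_union_left _ h
      · exact Finset.mem_union_right _
          (Finset.mem_biUnion.mpr ⟨x, hxA, Finset.mem_filter.mpr ⟨hu, hux, hnadj⟩⟩)
    have hsum : (A.biUnion (fun x => N.filter fun z => z ≠ x ∧ ¬ G.Adj x z)).card + A.card
        ≤ A.card * k := by
      calc (A.biUnion fun x => N.filter fun z => z ≠ x ∧ ¬ G.Adj x z).card + A.card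
          ≤ (∑ x ∈ A, (N.filter fun z => z ≠ x ∧ ¬ G.Adj x z).card) + A.card :=
            Nat.add_le_add_right (Finset.card_biUnion_le) _
        _ = ∑ x ∈ A, ((N.filter fun z => z ≠ x ∧ ¬ G.Adj x z).card + 1) := by
            rw [Finset.sum_add_distrib, Finset.sum_const, smul_eq_mul, Nat.mul_one]
        _ ≤ A.card * k := by
            have := Finset.sum_le_card_nsmul A
              (fun x => (N.filter fun z => z ≠ x ∧ ¬ G.Adj x z).card + 1) k
              (fun x hx => hE x (hAN hx))
            simpa [smul_eq_mul] using this
    have hNcard : N.card ≤ A.card * k := by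
      calc N.card ≤ (A ∪ A.biUnion fun x => N.filter fun z => z ≠ x ∧ ¬ G.Adj x z).card :=
          Finset.card_le_card hsub
        _ ≤ A.card + (A.biUnion fun x => N.filter fun z => z ≠ x ∧ ¬ G.Adj x z).card :=
          Finset.card_union_le _ _
        _ ≤ A.card * k := by omega
    calc N.card + k ≤ A.card * k + k := Nat.add_le_add_right hNcard k
      _ = (A.card + 1) * k := by ring
      _ ≤ k * k := Nat.mul_le_mul_right k hAk
  -- double counting
  have hdouble : ∑ w ∈ S, (N.filter fun x => G.Adj x w).card
      = ∑ x ∈ N, (S.filter fun w => G.Adj x w).card := by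
    simp only [Finset.card_filter]
    rw [Finset.sum_comm]
  have hsumC : (∑ x ∈ N, (S.filter fun w => G.Adj x w).card) + N.card ≤ N.card * k := by
    calc (∑ x ∈ N, (S.filter fun w => G.Adj x w).card) + N.card
        = ∑ x ∈ N, ((S.filter fun w => G.Adj x w).card + 1) := by
          rw [Finset.sum_add_distrib, Finset.sum_const, smul_eq_mul, Nat.mul_one]
      _ ≤ N.card * k := by
          have := Finset.sum_le_card_nsmul N
            (fun x => (S.filter fun w => G.Adj x w).card + 1) k hC
          simpa [smul_eq_mul] using this
  rw [hsplit]
  -- now the final arithmetic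
  by_cases hSemp : S = ∅
  · rw [hSemp]
    simp only [Finset.card_empty, Nat.add_zero]
    have h2 : k ≤ k * k := Nat.le_mul_of_pos_left k hk1
    omega
  · obtain ⟨w0, hw0S, hmin⟩ := S.exists_min_image
      (fun w => (N.filter fun x => G.Adj x w).card) (Finset.nonempty_of_ne_empty hSemp)
    set τ := (N.filter fun x => G.Adj x w0).card with hτdef
    obtain ⟨hnadj0, hne0, x0, hvx0, hx0w⟩ := (hmemS w0).mp hw0S
    have hτ1 : 1 ≤ τ := Finset.card_pos.mpr
      ⟨x0, Finset.mem_filter.mpr ⟨(hmemN x0).mpr hvx0, hx0w⟩⟩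
    have hk2 : 2 ≤ k := by
      have hvx0' : v ≠ x0 := fun h => G.irrefl (h ▸ hvx0)
      have hcl : G.IsClique (({v, x0} : Finset V) : Set V) := by
        rw [Finset.coe_insert, Finset.coe_singleton]
        intro a ha b hb hab
        rcases Set.mem_insert_iff.mp ha with rfl | ha' <;>
          rcases Set.mem_insert_iff.mp hb with rfl | hb'
        · exact absurd rfl hab
        · rw [Set.mem_singleton_iff.mp hb']; exact hvx0
        · rw [Set.mem_singleton_iff.mp ha']; exact hvx0.symm
        · rw [Set.mem_singleton_iff.mp ha', Set.mem_singleton_iff.mp hb'] at hab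
          exact absurd rfl hab
      have := hclique _ hcl
      rwa [Finset.card_insert_of_notMem (fun h => hvx0' (Finset.mem_singleton.mp h)), Finset.card_singleton] at this
    have hdτ : N.card + 3 ≤ τ + 2 * k := hdec w0 hw0S
    have hSτ : S.card * τ ≤ ∑ w ∈ S, (N.filter fun x => G.Adj x w).card := by
      have := Finset.card_nsmul_le_sum S (fun w => (N.filter fun x => G.Adj x w).card) τ hmin
      simpa [smul_eq_mul] using this
    have hF3 : S.card * τ + N.card ≤ N.card * k := by
      calc S.card * τ + N.card ≤ (∑ w ∈ S, (N.filter fun x => G.Adj x w).card) + N.card :=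
        Nat.add_le_add_right hSτ _
      _ = (∑ x ∈ N, (S.filter fun w => G.Adj x w).card) + N.card := by rw [hdouble]
      _ ≤ N.card * k := hsumC
    exact arith_aux N.card S.card τ k hdτ hdbound hF3 hτ1 hk2

theorem stmt_1 [Fintype V] (G : SimpleGraph V) (hG : ClawFree G) :
    (square G).chromaticNumber ≤
      ((2 * G.cliqueNum ^ 2 - 2 * G.cliqueNum + 1 : ℕ) : ℕ∞) := by
  classical
  have hdeg : ∀ v, (square G).degree v < 2 * G.cliqueNum ^ 2 - 2 * G.cliqueNum + 1 := by
    intro v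
    have h := sq_degree_bound G hG v
    have h2 : (square G).degree v ≤ 2 * (G.cliqueNum * G.cliqueNum) - 2 * G.cliqueNum :=
      Nat.le_sub_of_add_le h
    have hpow : 2 * G.cliqueNum ^ 2 = 2 * (G.cliqueNum * G.cliqueNum) := by ring
    rw [hpow]
    exact Nat.lt_succ_of_le h2
  exact (colorable_of_degree_lt (square G) hdeg).chromaticNumber_le
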